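/- Let I ⊂ k[x₁,...,x_n] be a homogeneous ideal, u, w two weight vectors lying in the same closed Gröbner cone τ_≺ associated to a monomial order ≺ (i.e., in_≺(in_u(I)) = in_≺(I) = in_≺(in_w(I))). Then the weight quasivaluations on R = k[x]/I satisfy v_u ⊕ v_w = v_{u+w}. -/

import Mathlib

open MvPolynomial
open scoped Classical

variable {k : Type*} [Field k] {n : ℕ}

/-- The `u`-weight valuation of a polynomial: the minimum of `⟨u, β⟩` over the
exponents `β` in the support (and `⊤` for the zero polynomial). -/
noncomputable def wtVal (u : Fin n → ℚ) (p : MvPolynomial (Fin n) k) : WithTop ℚ :=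
  p.support.inf (fun β => ((∑ i, u i * (β i : ℚ) : ℚ) : WithTop ℚ))

lemma le_wtVal_iff (u : Fin n → ℚ) (p : MvPolynomial (Fin n) k) (r : ℚ) :
    (r : WithTop ℚ) ≤ wtVal u p ↔
      ∀ β ∈ p.support, (r : WithTop ℚ) ≤ ((∑ i, u i * (β i : ℚ) : ℚ) : WithTop ℚ) :=
  Finset.le_inf_iff

/-- The subspace `F̄_r(u) = {p : v̄_u(p) ≥ r}` of the polynomial ring. -/
noncomputable def wtFilt (u : Fin n → ℚ) (r : ℚ) : Submodule k (MvPolynomial (Fin n) k) where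
  carrier := {p | (r : WithTop ℚ) ≤ wtVal u p}
  zero_mem' := by simp [wtVal]
  add_mem' := by
    intro a b ha hb
    rw [Set.mem_setOf_eq, le_wtVal_iff]
    intro β hβ
    rcases Finset.mem_union.mp (MvPolynomial.support_add hβ) with h | h
    · exact le_trans ha (Finset.inf_le h)
    · exact le_trans hb (Finset.inf_le h)
  smul_mem' := by
    intro c p hp
    rw [Set.mem_setOf_eq, le_wtVal_iff]
    intro β hβ
    exact le_trans hp (Finset.inf_le (MvPolynomial.support_smul hβ))

/-- The filtration `F_r(v_u)` of `R = k[x]/I` associated to the weight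
quasivaluation `v_u = π_* v̄_u`: its `r`-th piece is the image of
`F̄_r(u)` under the quotient map `π`. -/
noncomputable def wtFiltQuot (I : Ideal (MvPolynomial (Fin n) k)) (u : Fin n → ℚ) (r : ℚ) :
    Submodule k (MvPolynomial (Fin n) k ⧸ I) :=
  Submodule.map (Ideal.Quotient.mkₐ k I).toLinearMap (wtFilt u r)

/-- The initial form `in_u(f)`: the sum of the terms of `f` of minimal
`u`-weight. -/
noncomputable def initialFormQ (u : Fin n → ℚ) (f : MvPolynomial (Fin n) k) :
    MvPolynomial (Fin n) k :=
  ∑ β ∈ f.support.filter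
      (fun β => ∀ γ ∈ f.support, (∑ i, u i * (β i : ℚ)) ≤ ∑ i, u i * (γ i : ℚ)),
    monomial β (coeff β f)

/-- The initial ideal `in_u(I) = ⟨in_u(f) : f ∈ I⟩` of an ideal with respect to
a weight vector `u`. -/
noncomputable def initialIdealQ (u : Fin n → ℚ) (I : Ideal (MvPolynomial (Fin n) k)) :
    Ideal (MvPolynomial (Fin n) k) :=
  Ideal.span {g | ∃ f ∈ I, f ≠ 0 ∧ g = initialFormQ u f}

/-- The initial (monomial) ideal of `I` with respect to a monomial order `m`:
the ideal generated by the leading monomials of the nonzero elements of `I`. -/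
noncomputable def initialIdealOrd (m : MonomialOrder (Fin n))
    (I : Ideal (MvPolynomial (Fin n) k)) : Ideal (MvPolynomial (Fin n) k) :=
  Ideal.span {g | ∃ f ∈ I, f ≠ 0 ∧
    g = monomial (m.toSyn.symm (f.support.sup (fun β => m.toSyn β))) (1 : k)}


section Aux

open scoped Pointwise

/-- The leading exponent of a polynomial with respect to a monomial order. -/
noncomputable def ldexp (m : MonomialOrder (Fin n)) (f : MvPolynomial (Fin n) k) : Fin n →₀ ℕ :=
  m.toSyn.symm (f.support.sup (fun β => m.toSyn β))

lemma ldexp_mem_support (m : MonomialOrder (Fin n)) {f : MvPolynomial (Fin n) k} (hf : f ≠ 0) :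
    ldexp m f ∈ f.support := by
  obtain ⟨β, hβ, hs⟩ := Finset.exists_mem_eq_sup f.support
    (MvPolynomial.support_nonempty.mpr hf) (fun β => m.toSyn β)
  rw [ldexp, hs]
  simpa using hβ

lemma le_ldexp (m : MonomialOrder (Fin n)) {f : MvPolynomial (Fin n) k} {β : Fin n →₀ ℕ}
    (hβ : β ∈ f.support) : m.toSyn β ≤ m.toSyn (ldexp m f) := by
  rw [ldexp]
  simpa using Finset.le_sup (f := fun β => m.toSyn β) hβ

lemma monomial_ldexp_mem (m : MonomialOrder (Fin n)) {I : Ideal (MvPolynomial (Fin n) k)}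
    {f : MvPolynomial (Fin n) k} (hf : f ∈ I) (hne : f ≠ 0) :
    monomial (ldexp m f) (1 : k) ∈ initialIdealOrd m I :=
  Ideal.subset_span ⟨f, hf, hne, rfl⟩

lemma eq_zero_of_std (m : MonomialOrder (Fin n)) {I : Ideal (MvPolynomial (Fin n) k)}
    {d : MvPolynomial (Fin n) k} (hd : d ∈ I)
    (hstd : ∀ β ∈ d.support, monomial β (1 : k) ∉ initialIdealOrd m I) : d = 0 := by
  by_contra hne
  exact hstd _ (ldexp_mem_support m hne) (monomial_ldexp_mem m hd hne)

lemma exists_divisor (m : MonomialOrder (Fin n)) {I : Ideal (MvPolynomial (Fin n) k)}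
    {α : Fin n →₀ ℕ} (hα : monomial α (1 : k) ∈ initialIdealOrd m I) :
    ∃ f ∈ I, f ≠ 0 ∧ ldexp m f ≤ α := by
  have himg : {g | ∃ f ∈ I, f ≠ 0 ∧
        g = monomial (m.toSyn.symm (f.support.sup (fun β => m.toSyn β))) (1 : k)}
      = (fun s => monomial s (1 : k)) '' {s | ∃ f ∈ I, f ≠ 0 ∧ s = ldexp m f} := by
    ext g
    constructor
    · rintro ⟨f, hf, hne, rfl⟩
      exact ⟨ldexp m f, ⟨f, hf, hne, rfl⟩, rfl⟩
    · rintro ⟨s, ⟨f, hf, hne, rfl⟩, rfl⟩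
      exact ⟨f, hf, hne, rfl⟩
  rw [initialIdealOrd, himg, mem_ideal_span_monomial_image] at hα
  obtain ⟨s, ⟨f, hf, hne, rfl⟩, hle⟩ := hα α (by simp [support_monomial])
  exact ⟨f, hf, hne, hle⟩

lemma nf_exists (m : MonomialOrder (Fin n)) (I : Ideal (MvPolynomial (Fin n) k))
    (f : MvPolynomial (Fin n) k) :
    ∃ h : MvPolynomial (Fin n) k, f - h ∈ I ∧
      ∀ β ∈ h.support, monomial β (1 : k) ∉ initialIdealOrd m I := by
  set J := initialIdealOrd m I with hJ
  suffices H : ∀ s : m.syn, ∀ f : MvPolynomial (Fin n) k,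
      (f.support.filter (fun β => monomial β (1 : k) ∈ J)).sup (fun β => m.toSyn β) ≤ s →
      ∃ h, f - h ∈ I ∧ ∀ β ∈ h.support, monomial β (1 : k) ∉ J by
    exact H _ f le_rfl
  intro s
  induction s using WellFoundedLT.induction with
  | _ s IH =>
    intro f hfs
    by_cases hN : (f.support.filter (fun β => monomial β (1 : k) ∈ J)).Nonempty
    · obtain ⟨α, hαmem, hαsup⟩ := Finset.exists_mem_eq_sup _ hN (fun β => m.toSyn β)
      obtain ⟨hαsupp, hαJ⟩ := Finset.mem_filter.mp hαmem
      obtain ⟨f', hf'I, hf'ne, hf'le⟩ := exists_divisor m hαJ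
      have hlc : coeff (ldexp m f') f' ≠ 0 := mem_support_iff.mp (ldexp_mem_support m hf'ne)
      set c := (coeff (ldexp m f') f')⁻¹ * coeff α f with hc
      set g := monomial (α - ldexp m f') c * f' with hg
      have hgI : g ∈ I := Ideal.mul_mem_left _ _ hf'I
      have hcoeffg : coeff α g = coeff α f := by
        have h1 : coeff ((α - ldexp m f') + ldexp m f') g = c * coeff (ldexp m f') f' :=
          coeff_monomial_mul _ _ _ _
        rw [tsub_add_cancel_of_le hf'le] at h1
        rw [h1, hc, mul_comm (coeff (ldexp m f') f')⁻¹ (coeff α f), mul_assoc,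
          inv_mul_cancel₀ hlc, mul_one]
      have hgsupp : ∀ β ∈ g.support, m.toSyn β ≤ m.toSyn α ∧ (β ≠ α → m.toSyn β < m.toSyn α) := by
        intro β hβ
        obtain ⟨a, ha, b, hb, hab⟩ := Finset.mem_add.mp (support_mul _ _ hβ)
        have ha' : a = α - ldexp m f' := Finset.mem_singleton.mp (support_monomial_subset ha)
        subst ha'
        subst hab
        have hle1 : m.toSyn (α - ldexp m f' + b) ≤ m.toSyn α := by
          calc m.toSyn (α - ldexp m f' + b)
              = m.toSyn (α - ldexp m f') + m.toSyn b := map_add _ _ _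
            _ ≤ m.toSyn (α - ldexp m f') + m.toSyn (ldexp m f') :=
                add_le_add le_rfl (le_ldexp m hb)
            _ = m.toSyn (α - ldexp m f' + ldexp m f') := (map_add _ _ _).symm
            _ = m.toSyn α := by rw [tsub_add_cancel_of_le hf'le]
        refine ⟨hle1, fun hne => lt_of_le_of_ne hle1 ?_⟩
        exact fun hEq => hne (m.toSyn.injective hEq)
      set f₁ := f - g with hf₁
      have hf₁coeff : coeff α f₁ = 0 := by
        rw [hf₁, coeff_sub, hcoeffg, sub_self]
      have hf₁N : ∀ β ∈ f₁.support.filter (fun β => monomial β (1 : k) ∈ J),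
          m.toSyn β < m.toSyn α := by
        intro β hβ
        obtain ⟨hβs, hβJ⟩ := Finset.mem_filter.mp hβ
        have hβne : β ≠ α := by
          intro hEq
          exact mem_support_iff.mp hβs (hEq ▸ hf₁coeff)
        rcases Finset.mem_union.mp (support_sub _ _ _ hβs) with hβf | hβg
        · have : m.toSyn β ≤ m.toSyn α := by
            rw [← hαsup]
            exact Finset.le_sup (f := fun β => m.toSyn β) (Finset.mem_filter.mpr ⟨hβf, hβJ⟩)
          exact lt_of_le_of_ne this (fun hEq => hβne (m.toSyn.injective hEq))
        · exact (hgsupp β hβg).2 hβne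
      by_cases hN₁ : (f₁.support.filter (fun β => monomial β (1 : k) ∈ J)).Nonempty
      · obtain ⟨β₁, hβ₁, hβ₁sup⟩ := Finset.exists_mem_eq_sup _ hN₁ (fun β => m.toSyn β)
        have htlt : (f₁.support.filter (fun β => monomial β (1 : k) ∈ J)).sup
            (fun β => m.toSyn β) < s := by
          rw [hβ₁sup]
          exact lt_of_lt_of_le (hf₁N β₁ hβ₁) (le_trans (le_of_eq hαsup.symm) hfs)
        obtain ⟨h, hh1, hh2⟩ := IH _ htlt f₁ le_rfl
        refine ⟨h, ?_, hh2⟩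
        have : f - h = g + (f₁ - h) := by rw [hf₁]; ring
        rw [this]
        exact I.add_mem hgI hh1
      · refine ⟨f₁, ?_, ?_⟩
        · have : f - f₁ = g := by rw [hf₁]; ring
          rw [this]
          exact hgI
        · intro β hβ hmem
          exact hN₁ ⟨β, Finset.mem_filter.mpr ⟨hβ, hmem⟩⟩
    · refine ⟨f, by simp, ?_⟩
      intro β hβ hmem
      exact hN ⟨β, Finset.mem_filter.mpr ⟨hβ, hmem⟩⟩

lemma coeff_initialFormQ (u : Fin n → ℚ) (f : MvPolynomial (Fin n) k) (γ : Fin n →₀ ℕ) :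
    coeff γ (initialFormQ u f) =
      if γ ∈ f.support.filter
          (fun β => ∀ δ ∈ f.support, (∑ i, u i * (β i : ℚ)) ≤ ∑ i, u i * (δ i : ℚ))
      then coeff γ f else 0 := by
  rw [initialFormQ, coeff_sum]
  simp_rw [coeff_monomial]
  exact Finset.sum_ite_eq' _ γ (fun β => coeff β f)

lemma mem_support_initialFormQ (u : Fin n → ℚ) (f : MvPolynomial (Fin n) k) (γ : Fin n →₀ ℕ) :
    γ ∈ (initialFormQ u f).support ↔ γ ∈ f.support.filter
      (fun β => ∀ δ ∈ f.support, (∑ i, u i * (β i : ℚ)) ≤ ∑ i, u i * (δ i : ℚ)) := by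
  rw [mem_support_iff, coeff_initialFormQ]
  split_ifs with hγ
  · simp only [hγ, iff_true]
    exact mem_support_iff.mp (Finset.mem_filter.mp hγ).1
  · exact iff_of_false (by simp) hγ

/-- The key cone lemma: if `u` lies in the Gröbner cone of `m` for `I`, then passing to a
standard-monomial representative does not decrease the `u`-weight. -/
lemma wtVal_le_nf (m : MonomialOrder (Fin n)) {I : Ideal (MvPolynomial (Fin n) k)}
    {u : Fin n → ℚ}
    (hu : initialIdealOrd m (initialIdealQ u I) = initialIdealOrd m I)
    {f h : MvPolynomial (Fin n) k} (hfh : f - h ∈ I)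
    (hstd : ∀ β ∈ h.support, monomial β (1 : k) ∉ initialIdealOrd m I) :
    wtVal u f ≤ wtVal u h := by
  by_contra hlt
  push_neg at hlt
  have hhne : h ≠ 0 := by
    rintro rfl
    simp only [wtVal, support_zero, Finset.inf_empty] at hlt
    exact (not_top_lt hlt)
  obtain ⟨β₀, hβ₀, hinf⟩ := Finset.exists_mem_eq_inf h.support
    (MvPolynomial.support_nonempty.mpr hhne) (fun β => ((∑ i, u i * (β i : ℚ) : ℚ) : WithTop ℚ))
  have hinf' : wtVal u h = ((∑ i, u i * (β₀ i : ℚ) : ℚ) : WithTop ℚ) := hinf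
  set d := h - f with hd
  have hdI : d ∈ I := by
    have : d = -(f - h) := by rw [hd]; ring
    rw [this]
    exact I.neg_mem hfh
  have hβ₀f : β₀ ∉ f.support := by
    intro hmem
    have h1 : wtVal u f ≤ ((∑ i, u i * (β₀ i : ℚ) : ℚ) : WithTop ℚ) := Finset.inf_le hmem
    rw [← hinf'] at h1
    exact absurd h1 (not_le_of_gt hlt)
  have hβ₀d : β₀ ∈ d.support := by
    rw [mem_support_iff, hd, coeff_sub, notMem_support_iff.mp hβ₀f, sub_zero]
    exact mem_support_iff.mp hβ₀
  have hmin : ∀ γ ∈ d.support, (∑ i, u i * (β₀ i : ℚ)) ≤ ∑ i, u i * (γ i : ℚ) := by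
    intro γ hγ
    rcases Finset.mem_union.mp (support_sub _ _ _ hγ) with hγh | hγf
    · have h1 : wtVal u h ≤ ((∑ i, u i * (γ i : ℚ) : ℚ) : WithTop ℚ) := Finset.inf_le hγh
      rw [hinf'] at h1
      exact_mod_cast h1
    · have h1 : wtVal u f ≤ ((∑ i, u i * (γ i : ℚ) : ℚ) : WithTop ℚ) := Finset.inf_le hγf
      have h2 : ((∑ i, u i * (β₀ i : ℚ) : ℚ) : WithTop ℚ) < ((∑ i, u i * (γ i : ℚ) : ℚ) : WithTop ℚ) := by
        rw [← hinf']
        exact lt_of_lt_of_le hlt h1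
      exact le_of_lt (by exact_mod_cast h2)
  have hβ₀in : β₀ ∈ d.support.filter
      (fun β => ∀ δ ∈ d.support, (∑ i, u i * (β i : ℚ)) ≤ ∑ i, u i * (δ i : ℚ)) :=
    Finset.mem_filter.mpr ⟨hβ₀d, hmin⟩
  set e := initialFormQ u d with he
  have hene : e ≠ 0 := by
    intro hEq
    have : β₀ ∈ e.support := (mem_support_initialFormQ u d β₀).mpr hβ₀in
    rw [hEq] at this
    simp at this
  have hdne : d ≠ 0 := by
    intro hEq
    rw [hEq] at hβ₀d
    simp at hβ₀d
  have heI : e ∈ initialIdealQ u I := Ideal.subset_span ⟨d, hdI, hdne, rfl⟩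
  have hld : monomial (ldexp m e) (1 : k) ∈ initialIdealOrd m I := by
    rw [← hu]
    exact monomial_ldexp_mem m heI hene
  have hlds : ldexp m e ∈ e.support := ldexp_mem_support m hene
  rw [mem_support_initialFormQ] at hlds
  obtain ⟨hlds1, hlds2⟩ := Finset.mem_filter.mp hlds
  -- the leading exponent of e lies in the support of h
  have hldh : ldexp m e ∈ h.support := by
    rcases Finset.mem_union.mp (support_sub _ _ _ hlds1) with h1 | h1
    · exact h1
    · exfalso
      have h2 : wtVal u f ≤ ((∑ i, u i * ((ldexp m e) i : ℚ) : ℚ) : WithTop ℚ) := Finset.inf_le h1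
      have h3 : (∑ i, u i * ((ldexp m e) i : ℚ)) ≤ ∑ i, u i * (β₀ i : ℚ) := hlds2 β₀ hβ₀d
      have h4 : ((∑ i, u i * ((ldexp m e) i : ℚ) : ℚ) : WithTop ℚ) < wtVal u f := by
        apply lt_of_le_of_lt _ hlt
        rw [hinf']
        exact_mod_cast h3
      exact absurd h2 (not_le_of_gt h4)
  exact hstd _ hldh hld

lemma wt_add (u w : Fin n → ℚ) (β : Fin n →₀ ℕ) :
    (∑ i, (u + w) i * (β i : ℚ)) = (∑ i, u i * (β i : ℚ)) + ∑ i, w i * (β i : ℚ) := by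
  rw [← Finset.sum_add_distrib]
  congr 1
  ext i
  simp [add_mul]

end Aux

/-- let `I` be a homogeneous ideal of `k[x₁,…,x_n]` and `u, w`
two weight vectors lying in the same closed Gröbner cone `τ_≺` of a monomial
order `≺` (i.e. `in_≺(in_u(I)) = in_≺(I) = in_≺(in_w(I))`).  Then the weight
quasivaluations on `R = k[x]/I` satisfy `v_u ⊕ v_w = v_{u+w}`, i.e. the
filtration of `v_{u+w}` is the sum-filtration
`F_r(v_u ⊕ v_w) = Σ_{r₁+r₂=r} F_{r₁}(v_u) ∩ F_{r₂}(v_w)`. -/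
theorem weight_quasival_sum_of_same_groebner_cone
    (I : Ideal (MvPolynomial (Fin n) k))
    (hI : ∀ f ∈ I, ∀ d : ℕ, homogeneousComponent d f ∈ I)
    (m : MonomialOrder (Fin n)) (u w : Fin n → ℚ)
    (hu : initialIdealOrd m (initialIdealQ u I) = initialIdealOrd m I)
    (hw : initialIdealOrd m (initialIdealQ w I) = initialIdealOrd m I) :
    ∀ r : ℚ, wtFiltQuot I (u + w) r =
      ⨆ p : {p : ℚ × ℚ // p.1 + p.2 = r}, (wtFiltQuot I u p.1.1 ⊓ wtFiltQuot I w p.1.2) := by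
  intro r
  apply le_antisymm
  · rintro x ⟨p, hp, rfl⟩
    have hp' : (r : WithTop ℚ) ≤ wtVal (u + w) p := hp
    have hrepr : (Ideal.Quotient.mkₐ k I).toLinearMap p
        = ∑ β ∈ p.support, (Ideal.Quotient.mkₐ k I).toLinearMap (monomial β (coeff β p)) := by
      rw [← map_sum]
      congr 1
      exact (as_sum p)
    rw [hrepr]
    apply Submodule.sum_mem
    intro β hβ
    have hwt : r ≤ (∑ i, u i * (β i : ℚ)) + ∑ i, w i * (β i : ℚ) := by
      have h1 := (le_wtVal_iff (u + w) p r).mp hp' β hβ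
      rw [show ((∑ i, (u + w) i * (β i : ℚ) : ℚ) : WithTop ℚ)
          = (((∑ i, u i * (β i : ℚ)) + ∑ i, w i * (β i : ℚ) : ℚ) : WithTop ℚ) by
        rw [wt_add]] at h1
      exact_mod_cast h1
    refine Submodule.mem_iSup_of_mem
      ⟨(∑ i, u i * (β i : ℚ), r - ∑ i, u i * (β i : ℚ)), by ring⟩ ?_
    rw [Submodule.mem_inf]
    constructor
    · refine ⟨monomial β (coeff β p), ?_, rfl⟩
      show ((∑ i, u i * (β i : ℚ) : ℚ) : WithTop ℚ) ≤ wtVal u (monomial β (coeff β p))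
      rw [le_wtVal_iff]
      intro γ hγ
      have hγβ : γ = β := Finset.mem_singleton.mp (support_monomial_subset hγ)
      rw [hγβ]
    · refine ⟨monomial β (coeff β p), ?_, rfl⟩
      show ((r - ∑ i, u i * (β i : ℚ) : ℚ) : WithTop ℚ) ≤ wtVal w (monomial β (coeff β p))
      rw [le_wtVal_iff]
      intro γ hγ
      have hγβ : γ = β := Finset.mem_singleton.mp (support_monomial_subset hγ)
      rw [hγβ]
      have hle : r - (∑ i, u i * (β i : ℚ)) ≤ ∑ i, w i * (β i : ℚ) := by linarith
      exact_mod_cast hle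
  · apply iSup_le
    rintro ⟨⟨r₁, r₂⟩, hr⟩ x hx
    obtain ⟨hx1, hx2⟩ := Submodule.mem_inf.mp hx
    obtain ⟨p, hp, hpx⟩ := hx1
    obtain ⟨q, hq, hqx⟩ := hx2
    have hp' : (r₁ : WithTop ℚ) ≤ wtVal u p := hp
    have hq' : (r₂ : WithTop ℚ) ≤ wtVal w q := hq
    obtain ⟨h₁, hph, hstd1⟩ := nf_exists m I p
    obtain ⟨h₂, hqh, hstd2⟩ := nf_exists m I q
    have hpq : p - q ∈ I := by
      rw [← Ideal.Quotient.eq]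
      have : Ideal.Quotient.mkₐ k I p = Ideal.Quotient.mkₐ k I q := by
        have := hpx.trans hqx.symm
        exact this
      simpa [Ideal.Quotient.mkₐ_eq_mk] using this
    have h12 : h₁ - h₂ ∈ I := by
      have : h₁ - h₂ = -(p - h₁) + (p - q) + (q - h₂) := by ring
      rw [this]
      exact I.add_mem (I.add_mem (I.neg_mem hph) hpq) hqh
    have heq : h₁ = h₂ := by
      rw [← sub_eq_zero]
      refine eq_zero_of_std m h12 ?_
      intro β hβ
      rcases Finset.mem_union.mp (support_sub _ _ _ hβ) with h1 | h1
      · exact hstd1 β h1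
      · exact hstd2 β h1
    have hw1 : (r₁ : WithTop ℚ) ≤ wtVal u h₁ :=
      le_trans hp' (wtVal_le_nf m hu hph hstd1)
    have hw2 : (r₂ : WithTop ℚ) ≤ wtVal w h₁ := by
      rw [heq]
      exact le_trans hq' (wtVal_le_nf m hw hqh hstd2)
    refine ⟨h₁, ?_, ?_⟩
    · show (r : WithTop ℚ) ≤ wtVal (u + w) h₁
      rw [le_wtVal_iff]
      intro β hβ
      have g1 : (r₁ : WithTop ℚ) ≤ ((∑ i, u i * (β i : ℚ) : ℚ) : WithTop ℚ) :=
        (le_wtVal_iff u h₁ r₁).mp hw1 β hβ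
      have g2 : (r₂ : WithTop ℚ) ≤ ((∑ i, w i * (β i : ℚ) : ℚ) : WithTop ℚ) :=
        (le_wtVal_iff w h₁ r₂).mp hw2 β hβ
      have g1' : r₁ ≤ ∑ i, u i * (β i : ℚ) := by exact_mod_cast g1
      have g2' : r₂ ≤ ∑ i, w i * (β i : ℚ) := by exact_mod_cast g2
      have hr' : r₁ + r₂ = r := hr
      rw [wt_add]
      have hle : r ≤ (∑ i, u i * (β i : ℚ)) + ∑ i, w i * (β i : ℚ) := by linarith
      exact_mod_cast hle
    · rw [← hpx]
      show Ideal.Quotient.mkₐ k I h₁ = Ideal.Quotient.mkₐ k I p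
      have : h₁ - p ∈ I := by
        have h2 : h₁ - p = -(p - h₁) := by ring
        rw [h2]
        exact I.neg_mem hph
      simpa [Ideal.Quotient.mkₐ_eq_mk] using Ideal.Quotient.eq.mpr this
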